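/- Let τ ∈ (−1, 1) and let k₊, k₋, V be positive reals. Define V₊ := (V + 4πτ·k₋/(1 − τ²))/(1 + k₋/k₊) and V₋ := (V − 4πτ·k₊/(1 − τ²))/(1 + k₊/k₋). Then V₊ + V₋ = V, and if V₊ > 0, V₋ > 0, (1 − τ) − 2π·k₊/V₊ ≠ 0 and (1 + τ) − 2π·k₋/V₋ ≠ 0, then (1 − τ)·(k₊/V₊) / (1 − τ − 2π·k₊/V₊) = (1 + τ)·(k₋/V₋) / (1 + τ − 2π·k₋/V₋). -/

import Mathlib

open Real

/-- The partial volumes `V₊, V₋` split the total volume `V` and equalize the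
pressures of the separated vortex and antivortex gases. -/
theorem stmt6 (τ kp km V Vp Vm : ℝ) (hτ1 : -1 < τ) (hτ2 : τ < 1)
    (hkp : 0 < kp) (hkm : 0 < km) (hV : 0 < V)
    (hVp : Vp = (V + 4 * π * τ * km / (1 - τ ^ 2)) / (1 + km / kp))
    (hVm : Vm = (V - 4 * π * τ * kp / (1 - τ ^ 2)) / (1 + kp / km)) :
    Vp + Vm = V ∧
      (0 < Vp → 0 < Vm →
        (1 - τ) - 2 * π * kp / Vp ≠ 0 → (1 + τ) - 2 * π * km / Vm ≠ 0 →
        (1 - τ) * (kp / Vp) / ((1 - τ) - 2 * π * kp / Vp) =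
          (1 + τ) * (km / Vm) / ((1 + τ) - 2 * π * km / Vm)) := by
  have hτsq : (1 : ℝ) - τ ^ 2 ≠ 0 := by nlinarith
  have hkp' := hkp.ne'
  have hkm' := hkm.ne'
  have h1 : (1 : ℝ) + km / kp ≠ 0 := by positivity
  have h2 : (1 : ℝ) + kp / km ≠ 0 := by positivity
  constructor
  · rw [hVp, hVm]; field_simp; ring
  · intro hp hm hd1 hd2
    rw [div_eq_div_iff hd1 hd2]
    have e1 : Vp * (kp + km) * (1 - τ ^ 2) = kp * (V * (1 - τ ^ 2) + 4 * π * τ * km) := by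
      rw [hVp]; field_simp
    have e2 : Vm * (kp + km) * (1 - τ ^ 2) = km * (V * (1 - τ ^ 2) - 4 * π * τ * kp) := by
      rw [hVm]; field_simp; ring
    have hVpne := hp.ne'
    have hVmne := hm.ne'
    field_simp
    have hs : kp + km ≠ 0 := by positivity
    have key : (1 - τ ^ 2) * (kp * Vm - km * Vp) = -(4 * π * τ * kp * km) := by
      apply mul_left_cancel₀ hs
      linear_combination kp * e2 - km * e1
    linear_combination key
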